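/- For any full component C with terminal set R_C and any weighted complete graph M on a vertex set containing R_C, the save of C decomposes into save edges: save(M,C) = d(MST(M)) − d(MST(M/C)) equals the total cost of the |R_C| − 1 edges removed when iteratively, for pairs covering R_C, replacing the maximum-cost edge save_M(u,v) on the tree path by a zero-cost edge {u,v}. -/

import Mathlib

open Finset SimpleGraph

variable {V : Type*} [Fintype V] [DecidableEq V]

/-- Total cost of a finite set of edges. -/
def edgeCost (w : Sym2 V → ℝ) (T : Finset (Sym2 V)) : ℝ := ∑ e ∈ T, w e

/-- `T` is the edge set of a tree spanning exactly the vertex set `A`. -/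
def IsTreeOn (A : Finset V) (T : Finset (Sym2 V)) : Prop :=
  (∀ e ∈ T, ∀ x ∈ e, x ∈ A) ∧ (∀ e ∈ T, ¬ e.IsDiag) ∧ T.card + 1 = A.card ∧
    ∀ u ∈ A, ∀ v ∈ A, (SimpleGraph.fromEdgeSet (↑T : Set (Sym2 V))).Reachable u v

/-- Cost of a minimum spanning tree on vertex set `A` of the complete graph weighted by `w`. -/
noncomputable def mstCostOn (w : Sym2 V → ℝ) (A : Finset V) : ℝ :=
  sInf (edgeCost w '' {T | IsTreeOn A T})

/-- All (non-loop) pairs inside `S`. -/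
def Rpairs (S : Finset V) : Set (Sym2 V) := {e | ∃ u ∈ S, ∃ v ∈ S, u ≠ v ∧ e = s(u, v)}

open Classical in
/-- Contracting the vertex set `S`: add zero-cost edges between all pairs of `S`. -/
noncomputable def contractWeight (w : Sym2 V → ℝ) (S : Finset V) : Sym2 V → ℝ :=
  fun e => if e ∈ Rpairs S then 0 else w e

/-- `save(M, C)` where `M` is the complete graph on `A` weighted by `w` and
`S` is the terminal set of the full component `C`. -/
noncomputable def saveOn (w : Sym2 V → ℝ) (A S : Finset V) : ℝ :=
  mstCostOn w A - mstCostOn (contractWeight w S) A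

/-- Vertices touched by an edge set. -/
def supportOf (T : Finset (Sym2 V)) : Finset V :=
  Finset.univ.filter (fun v => ∃ e ∈ T, v ∈ e)

/-- Degree of `v` in the edge set `T`. -/
def degIn (T : Finset (Sym2 V)) (v : V) : ℕ := (T.filter (fun e => v ∈ e)).card

/-- `E` is a full component with vertex set `S` and terminal set `R`:
a tree on `S` whose set of leaves is exactly `R`. -/
def IsFullComponent (R S : Finset V) (E : Finset (Sym2 V)) : Prop :=
  IsTreeOn S E ∧ R ⊆ S ∧ ∀ v ∈ S, (degIn E v = 1 ↔ v ∈ R)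

/-- The terminals of the component with edge set `E'` w.r.t. the global terminal set `R`. -/
def compR (R : Finset V) (E' : Finset (Sym2 V)) : Finset V := supportOf E' ∩ R

/-- `E'` is a full component w.r.t. the terminal set `R`. -/
def IsFullComponentOf (R : Finset V) (E' : Finset (Sym2 V)) : Prop :=
  IsFullComponent (compR R E') (supportOf E') E'

/-- A Steiner tree for terminal set `R`: a tree containing all terminals. -/
def IsSteinerTree (R : Finset V) (T : Finset (Sym2 V)) : Prop :=
  IsTreeOn (supportOf T ∪ R) T

/-- `P` is a decomposition of the Steiner tree `T` into full components,
each with at most `k` terminals. -/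
def KDecomposition (k : ℕ) (R : Finset V) (T : Finset (Sym2 V))
    (P : Finset (Finset (Sym2 V))) : Prop :=
  (∀ E' ∈ P, IsFullComponentOf R E' ∧ (compR R E').card ≤ k) ∧
  (∀ e ∈ T, ∃! E', E' ∈ P ∧ e ∈ E') ∧ (∀ E' ∈ P, E' ⊆ T)

/-- `T` is a `k`-restricted Steiner tree. -/
def IsKRestricted (k : ℕ) (R : Finset V) (T : Finset (Sym2 V)) : Prop :=
  ∃ P, KDecomposition k R T P


/- ## auxiliary -/

lemma walk_rel {G : SimpleGraph V} {r : V → V → Prop} (hrefl : Reflexive r)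
    (htrans : Transitive r) {u v : V} (p : G.Walk u v)
    (h : ∀ x y, G.Adj x y → s(x, y) ∈ p.edges → r x y) : r u v := by
  induction p with
  | nil => exact hrefl _
  | cons hadj q ih =>
      refine htrans (h _ _ hadj (by simp)) (ih fun x y hxy hm => h x y hxy (by simp [hm]))

lemma reach_rel {G : SimpleGraph V} {r : V → V → Prop} (hrefl : Reflexive r)
    (htrans : Transitive r) {u v : V} (hr : G.Reachable u v)
    (h : ∀ x y, G.Adj x y → r x y) : r u v := by
  obtain ⟨p⟩ := hr
  exact walk_rel hrefl htrans p fun x y hxy _ => h x y hxy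

lemma deleteEdges_eq_erase (T : Finset (Sym2 V)) (f : Sym2 V) :
    (fromEdgeSet (↑T : Set (Sym2 V))).deleteEdges {f} =
      fromEdgeSet (↑(T.erase f) : Set (Sym2 V)) := by
  ext a b
  simp only [deleteEdges_adj, fromEdgeSet_adj, Finset.coe_erase, Set.mem_diff,
    Set.mem_singleton_iff, Finset.mem_coe, Set.mem_setOf_eq]
  tauto

/-- A connected graph on `V` given by an edge finset has at least `card V - 1` edges. -/
lemma card_le_of_preconnected (X : Finset (Sym2 V))
    (hpre : (fromEdgeSet (↑X : Set (Sym2 V))).Preconnected) :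
    Fintype.card V ≤ X.card + 1 := by
  cases isEmpty_or_nonempty V
  · simp
  set G := fromEdgeSet (↑X : Set (Sym2 V)) with hG
  obtain ⟨r⟩ := ‹Nonempty V›
  have key : ∀ v : V, ∃ c : V, v ≠ r → G.Adj v c ∧ G.dist c r < G.dist v r := by
    intro v
    by_cases hv : v = r
    · exact ⟨r, fun h => absurd hv h⟩
    have hreach : G.Reachable v r := hpre v r
    obtain ⟨p, hp⟩ := hreach.exists_walk_length_eq_dist
    have hpos : 0 < G.dist v r := hreach.pos_dist_of_ne hv
    cases p with
    | nil => exact absurd rfl hv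
    | @cons _ b _ hadj q =>
        refine ⟨b, fun _ => ⟨hadj, ?_⟩⟩
        have h1 : G.dist b r ≤ q.length := dist_le q
        simp only [Walk.length_cons] at hp
        omega
  classical
  choose c hc using key
  have hmaps : ∀ v ∈ univ.erase r, s(v, c v) ∈ X := by
    intro v hv
    have := (hc v (Finset.mem_erase.1 hv).1).1
    rw [hG, fromEdgeSet_adj] at this
    exact this.1
  have hinj : Set.InjOn (fun v : V => s(v, c v)) ((univ.erase r : Finset V) : Set V) := by
    intro v hv v' hv' heq
    simp only [Finset.coe_erase, Set.mem_diff, Set.mem_singleton_iff] at hv hv'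
    simp only [Sym2.eq_iff] at heq
    rcases heq with ⟨rfl, -⟩ | ⟨h1, h2⟩
    · rfl
    · exfalso
      have l1 := (hc v hv.2).2
      have l2 := (hc v' hv'.2).2
      rw [h2] at l1; rw [← h1] at l2
      omega
  have hcard : (univ.erase r).card ≤ X.card :=
    Finset.card_le_card_of_injOn _ hmaps hinj
  have : (univ.erase r).card = Fintype.card V - 1 := by
    rw [Finset.card_erase_of_mem (Finset.mem_univ r), Finset.card_univ]
  have hVpos : 0 < Fintype.card V := Fintype.card_pos
  omega

set_option linter.unusedSectionVars false

lemma IsTreeOn.card_eq {T : Finset (Sym2 V)} (hT : IsTreeOn Finset.univ T) :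
    T.card + 1 = Fintype.card V := by
  have := hT.2.2.1
  rwa [Finset.card_univ] at this

lemma IsTreeOn.reach {T : Finset (Sym2 V)} (hT : IsTreeOn Finset.univ T) (u v : V) :
    (fromEdgeSet (↑T : Set (Sym2 V))).Reachable u v :=
  hT.2.2.2 u (Finset.mem_univ u) v (Finset.mem_univ v)

/-- In a spanning tree, removing an edge disconnects its endpoints. -/
lemma tree_not_reach_erase {T : Finset (Sym2 V)} (hT : IsTreeOn Finset.univ T)
    {a b : V} (hf : s(a, b) ∈ T) :
    ¬ (fromEdgeSet (↑(T.erase s(a, b)) : Set (Sym2 V))).Reachable a b := by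
  intro hab
  set G' := fromEdgeSet (↑(T.erase s(a, b)) : Set (Sym2 V)) with hG'
  have hpre : G'.Preconnected := by
    intro x y
    refine reach_rel (fun z => Reachable.refl z) (fun _ _ _ h1 h2 => h1.trans h2)
      (hT.reach x y) ?_
    intro x' y' hadj
    rw [fromEdgeSet_adj] at hadj
    by_cases he : s(x', y') = s(a, b)
    · rw [Sym2.eq_iff] at he
      rcases he with ⟨rfl, rfl⟩ | ⟨rfl, rfl⟩
      · exact hab
      · exact hab.symm
    · refine SimpleGraph.Adj.reachable ?_
      rw [hG', fromEdgeSet_adj]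
      exact ⟨Finset.mem_coe.2 (Finset.mem_erase.2 ⟨he, Finset.mem_coe.1 hadj.1⟩), hadj.2⟩
  have hle := card_le_of_preconnected _ hpre
  have hcard := hT.card_eq
  have : (T.erase s(a, b)).card = T.card - 1 := Finset.card_erase_of_mem hf
  have hTpos : 0 < T.card := Finset.card_pos.2 ⟨_, hf⟩
  omega

lemma tree_acyclic {T : Finset (Sym2 V)} (hT : IsTreeOn Finset.univ T) :
    (fromEdgeSet (↑T : Set (Sym2 V))).IsAcyclic := by
  rw [isAcyclic_iff_forall_edge_isBridge]
  intro e he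
  rw [edgeSet_fromEdgeSet, Set.mem_diff] at he
  induction e with
  | _ a b =>
    rw [isBridge_iff]
    rw [deleteEdges_eq_erase]
    exact tree_not_reach_erase hT (Finset.mem_coe.1 he.1)

/-- An edge on a path between `u` and `v` separates `u` from `v`, provided it separates
its own endpoints. -/
lemma path_edge_separates {G : SimpleGraph V} {u v a b : V} (p : G.Walk u v)
    (hnd : p.edges.Nodup) (hmem : s(a, b) ∈ p.edges)
    (hab : ¬ (G.deleteEdges {s(a, b)}).Reachable a b) :
    ¬ (G.deleteEdges {s(a, b)}).Reachable u v := by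
  induction p with
  | nil => simp at hmem
  | @cons u c v hadj q ih =>
      rw [Walk.edges_cons, List.nodup_cons] at hnd
      by_cases heq : s(a, b) = s(u, c)
      · -- the removed edge is the first edge of the path
        have hq : ∀ e ∈ q.edges, e ∉ ({s(a, b)} : Set (Sym2 V)) := by
          intro e hee
          simp only [Set.mem_singleton_iff]
          rintro rfl
          exact hnd.1 (heq ▸ hee)
        have hqq : (G.deleteEdges {s(a, b)}).Reachable c v :=
          (q.toDeleteEdges _ hq).reachable
        rw [Sym2.eq_iff] at heq
        intro huv
        rcases heq with ⟨rfl, rfl⟩ | ⟨rfl, rfl⟩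
        · exact hab (huv.trans hqq.symm)
        · exact hab (hqq.trans huv.symm)
      · have hmem' : s(a, b) ∈ q.edges := by
          rw [Walk.edges_cons, List.mem_cons] at hmem
          rcases hmem with h | h
          · exact absurd h heq
          · exact h
        have hcv := ih hnd.2 hmem'
        intro huv
        have hadj' : (G.deleteEdges {s(a, b)}).Adj u c := by
          rw [deleteEdges_adj]
          refine ⟨hadj, ?_⟩
          simp only [Set.mem_singleton_iff]
          exact fun h => heq h.symm
        exact hcv (hadj'.symm.reachable.trans huv)

/-- Exchange: removing an edge `f` from a spanning tree and adding an edge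
joining the two resulting components yields a spanning tree. -/
lemma exchange {T : Finset (Sym2 V)} (hT : IsTreeOn Finset.univ T)
    {f : Sym2 V} (hf : f ∈ T) {x y : V}
    (hxy : ¬ (fromEdgeSet (↑(T.erase f) : Set (Sym2 V))).Reachable x y) :
    IsTreeOn Finset.univ (insert s(x, y) (T.erase f)) := by
  have hne : x ≠ y := fun h => hxy (h ▸ Reachable.refl x)
  induction f with
  | _ a b =>
    have hd : ¬ (s(a,b)).IsDiag := hT.2.1 _ hf
    set G9 := fromEdgeSet (↑(T.erase s(a, b)) : Set (Sym2 V)) with hG9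
    have hnab : ¬ G9.Reachable a b := tree_not_reach_erase hT hf
    -- every vertex reaches `a` or `b` after removing the edge
    have claimC : ∀ z : V, G9.Reachable z a ∨ G9.Reachable z b := by
      intro z
      have hrel := reach_rel (r := fun z w => G9.Reachable z w ∨
          (G9.Reachable z a ∧ G9.Reachable b w) ∨ (G9.Reachable z b ∧ G9.Reachable a w))
        (fun z => Or.inl (Reachable.refl z)) ?_ (hT.reach z a) ?_
      · rcases hrel with h | ⟨h1, h2⟩ | ⟨h1, h2⟩
        · exact Or.inl h
        · exact absurd h2.symm hnab
        · exact Or.inr h1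
      · rintro p q t (hpq | ⟨h1, h2⟩ | ⟨h1, h2⟩) (hqt | ⟨h3, h4⟩ | ⟨h3, h4⟩)
        · exact Or.inl (hpq.trans hqt)
        · exact Or.inr (Or.inl ⟨hpq.trans h3, h4⟩)
        · exact Or.inr (Or.inr ⟨hpq.trans h3, h4⟩)
        · exact Or.inr (Or.inl ⟨h1, h2.trans hqt⟩)
        · exact absurd (h2.trans h3).symm hnab
        · exact Or.inl (h1.trans h4)
        · exact Or.inr (Or.inr ⟨h1, h2.trans hqt⟩)
        · exact Or.inl (h1.trans h4)
        · exact absurd (h2.trans h3) hnab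
      · intro p q hadj
        rw [fromEdgeSet_adj] at hadj
        by_cases he : s(p, q) = s(a, b)
        · rw [Sym2.eq_iff] at he
          rcases he with ⟨rfl, rfl⟩ | ⟨rfl, rfl⟩
          · exact Or.inr (Or.inl ⟨Reachable.refl _, Reachable.refl _⟩)
          · exact Or.inr (Or.inr ⟨Reachable.refl _, Reachable.refl _⟩)
        · refine Or.inl (SimpleGraph.Adj.reachable ?_)
          rw [hG9, fromEdgeSet_adj]
          exact ⟨Finset.mem_coe.2 (Finset.mem_erase.2 ⟨he, Finset.mem_coe.1 hadj.1⟩), hadj.2⟩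
    have hxyT : s(x, y) ∉ T.erase s(a, b) := by
      intro h
      refine hxy (SimpleGraph.Adj.reachable ?_)
      rw [hG9, fromEdgeSet_adj]
      exact ⟨Finset.mem_coe.2 h, hne⟩
    set G' := fromEdgeSet (↑(insert s(x, y) (T.erase s(a, b))) : Set (Sym2 V)) with hG'
    have hle : G9 ≤ G' := fromEdgeSet_mono (by
      rw [Finset.coe_subset]
      exact Finset.subset_insert _ _)
    have hmono : ∀ {p q : V}, G9.Reachable p q → G'.Reachable p q :=
      fun h => h.mono hle
    have hadjxy : G'.Adj x y := by
      rw [hG', fromEdgeSet_adj]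
      exact ⟨Finset.mem_coe.2 (Finset.mem_insert_self _ _), hne⟩
    have hab' : G'.Reachable a b := by
      rcases claimC x with hxa | hxb <;> rcases claimC y with hya | hyb
      · exact absurd (hxa.trans hya.symm) hxy
      · exact ((hmono hxa).symm.trans hadjxy.reachable).trans (hmono hyb)
      · exact ((hmono hya).symm.trans hadjxy.symm.reachable).trans (hmono hxb)
      · exact absurd (hxb.trans hyb.symm) hxy
    have hreachG' : ∀ z : V, G'.Reachable z a := by
      intro z
      rcases claimC z with h | h
      · exact hmono h
      · exact (hmono h).trans hab'.symm
    refine ⟨fun e _ x _ => Finset.mem_univ _, ?_, ?_, ?_⟩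
    · intro e he
      rcases Finset.mem_insert.1 he with rfl | he'
      · rw [Sym2.isDiag_iff_proj_eq]
        exact hne
      · exact hT.2.1 _ (Finset.mem_of_mem_erase he')
    · rw [Finset.card_insert_of_notMem hxyT, Finset.card_erase_of_mem hf]
      have h1 := hT.2.2.1
      have hTpos : 0 < T.card := Finset.card_pos.2 ⟨_, hf⟩
      omega
    · intro u' _ v' _
      exact (hreachG' u').trans (hreachG' v').symm

lemma edgeCost_exchange (w : Sym2 V → ℝ) {T : Finset (Sym2 V)} {f e : Sym2 V}
    (hf : f ∈ T) (he : e ∉ T.erase f) :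
    edgeCost w (insert e (T.erase f)) = edgeCost w T - w f + w e := by
  unfold edgeCost
  rw [Finset.sum_insert he, Finset.sum_erase_eq_sub hf]
  ring

lemma mstCostOn_le (w : Sym2 V → ℝ) {T : Finset (Sym2 V)} (hT : IsTreeOn Finset.univ T) :
    mstCostOn w Finset.univ ≤ edgeCost w T := by
  have hfin : (edgeCost w '' {T | IsTreeOn Finset.univ T}).Finite :=
    Set.Finite.image _ (Set.toFinite _)
  exact csInf_le hfin.bddBelow ⟨T, hT, rfl⟩

lemma mstCostOn_attained (w : Sym2 V → ℝ) {T : Finset (Sym2 V)}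
    (hT : IsTreeOn Finset.univ T) :
    ∃ T₀, IsTreeOn Finset.univ T₀ ∧ edgeCost w T₀ = mstCostOn w Finset.univ := by
  have hfin : (edgeCost w '' {T | IsTreeOn Finset.univ T}).Finite :=
    Set.Finite.image _ (Set.toFinite _)
  have hne : (edgeCost w '' {T | IsTreeOn Finset.univ T}).Nonempty := ⟨_, T, hT, rfl⟩
  obtain ⟨T₀, hT₀, h⟩ := hne.csInf_mem hfin
  exact ⟨T₀, hT₀, h⟩

lemma mem_rpairs {S : Finset V} {a b : V} :
    s(a, b) ∈ Rpairs S ↔ a ∈ S ∧ b ∈ S ∧ a ≠ b := by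
  constructor
  · rintro ⟨u, hu, v, hv, hne, heq⟩
    rw [Sym2.eq_iff] at heq
    rcases heq with ⟨rfl, rfl⟩ | ⟨rfl, rfl⟩
    · exact ⟨hu, hv, hne⟩
    · exact ⟨hv, hu, hne.symm⟩
  · rintro ⟨ha, hb, hne⟩
    exact ⟨a, ha, b, hb, hne, rfl⟩

lemma rpairs_not_diag {S : Finset V} {e : Sym2 V} (he : e ∈ Rpairs S) : ¬ e.IsDiag := by
  induction e with
  | _ a b =>
    rw [mem_rpairs] at he
    rw [Sym2.isDiag_iff_proj_eq]
    exact he.2.2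

lemma contractWeight_of_mem {w : Sym2 V → ℝ} {S : Finset V} {e : Sym2 V}
    (he : e ∈ Rpairs S) : contractWeight w S e = 0 := by
  rw [contractWeight, if_pos he]

lemma contractWeight_of_not_mem {w : Sym2 V → ℝ} {S : Finset V} {e : Sym2 V}
    (he : e ∉ Rpairs S) : contractWeight w S e = w e := by
  rw [contractWeight, if_neg he]

lemma contractWeight_nonneg {w : Sym2 V → ℝ} (hw : ∀ e, 0 ≤ w e) (S : Finset V)
    (e : Sym2 V) : 0 ≤ contractWeight w S e := by
  rw [contractWeight]
  split <;> simp [hw]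

lemma contractWeight_le {w : Sym2 V → ℝ} (hw : ∀ e, 0 ≤ w e) (S : Finset V)
    (e : Sym2 V) : contractWeight w S e ≤ w e := by
  rw [contractWeight]
  split <;> simp [hw]

/-- Edges of `T` joining two terminals of `S`. -/
noncomputable def rpF (S : Finset V) (T : Finset (Sym2 V)) : Finset (Sym2 V) :=
  @Finset.filter _ (· ∈ Rpairs S) (Classical.decPred _) T

lemma mem_rpF {S : Finset V} {T : Finset (Sym2 V)} {e : Sym2 V} :
    e ∈ rpF S T ↔ e ∈ T ∧ e ∈ Rpairs S := by
  rw [rpF, @Finset.mem_filter _ _ (Classical.decPred _)]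

/-- There is an MST of the contracted weight in which the terminals `S` are connected
through terminal-terminal edges. -/
lemma exists_mst_connecting (w : Sym2 V → ℝ) (hw : ∀ e, 0 ≤ w e) (S : Finset V)
    {T : Finset (Sym2 V)} (hT : IsTreeOn Finset.univ T) :
    ∃ Ts, IsTreeOn Finset.univ Ts ∧
      edgeCost (contractWeight w S) Ts = mstCostOn (contractWeight w S) Finset.univ ∧
      ∀ u ∈ S, ∀ v ∈ S, (fromEdgeSet (↑(rpF S Ts) : Set (Sym2 V))).Reachable u v := by
  set w' := contractWeight w S with hw'
  obtain ⟨T₀, hT₀, hcost₀⟩ := mstCostOn_attained w' hT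
  have main : ∀ n : ℕ, ∀ T₀ : Finset (Sym2 V), IsTreeOn Finset.univ T₀ →
      edgeCost w' T₀ = mstCostOn w' Finset.univ →
      Fintype.card (Sym2 V) - (rpF S T₀).card = n →
      ∃ Ts, IsTreeOn Finset.univ Ts ∧ edgeCost w' Ts = mstCostOn w' Finset.univ ∧
        ∀ u ∈ S, ∀ v ∈ S, (fromEdgeSet (↑(rpF S Ts) : Set (Sym2 V))).Reachable u v := by
    intro n
    induction n using Nat.strong_induction_on with
    | _ n ih =>
      intro T₀ hT₀ hcost hn
      by_cases hconn : ∀ u ∈ S, ∀ v ∈ S,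
          (fromEdgeSet (↑(rpF S T₀) : Set (Sym2 V))).Reachable u v
      · exact ⟨T₀, hT₀, hcost, hconn⟩
      push_neg at hconn
      obtain ⟨u, hu, v, hv, hnr⟩ := hconn
      have hune : u ≠ v := fun h => hnr (h ▸ Reachable.refl u)
      have heRp : s(u, v) ∈ Rpairs S := mem_rpairs.2 ⟨hu, hv, hune⟩
      have he_not : s(u, v) ∉ T₀ := by
        intro h
        refine hnr (SimpleGraph.Adj.reachable ?_)
        rw [fromEdgeSet_adj]
        exact ⟨Finset.mem_coe.2 (mem_rpF.2 ⟨h, heRp⟩), hune⟩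
      obtain ⟨q, hq⟩ : ∃ q : (fromEdgeSet (↑T₀ : Set (Sym2 V))).Walk u v, q.IsPath := by
        obtain ⟨p⟩ := hT₀.reach u v
        exact ⟨p.toPath, p.toPath.2⟩
      have hbad : ∃ x y, (fromEdgeSet (↑T₀ : Set (Sym2 V))).Adj x y ∧
          s(x, y) ∈ q.edges ∧ ¬ (fromEdgeSet (↑(rpF S T₀) : Set (Sym2 V))).Reachable x y := by
        by_contra hno
        push_neg at hno
        exact hnr (walk_rel (fun z => Reachable.refl z)
          (fun _ _ _ h1 h2 => h1.trans h2) q hno)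
      obtain ⟨x, y, hadj, hqmem, hnrxy⟩ := hbad
      rw [fromEdgeSet_adj] at hadj
      have hxyT : s(x, y) ∈ T₀ := Finset.mem_coe.1 hadj.1
      have hxyRp : s(x, y) ∉ Rpairs S := by
        intro h
        refine hnrxy (SimpleGraph.Adj.reachable ?_)
        rw [fromEdgeSet_adj]
        exact ⟨Finset.mem_coe.2 (mem_rpF.2 ⟨hxyT, h⟩), hadj.2⟩
      have hsep : ¬ (fromEdgeSet (↑(T₀.erase s(x, y)) : Set (Sym2 V))).Reachable u v := by
        have h0 := path_edge_separates q hq.isTrail.edges_nodup hqmem (by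
          rw [deleteEdges_eq_erase]
          exact tree_not_reach_erase hT₀ hxyT)
        rwa [deleteEdges_eq_erase] at h0
      set T₁ := insert s(u, v) (T₀.erase s(x, y)) with hT₁def
      have hT₁ : IsTreeOn Finset.univ T₁ := exchange hT₀ hxyT hsep
      have he_not_erase : s(u, v) ∉ T₀.erase s(x, y) := fun h =>
        he_not (Finset.mem_of_mem_erase h)
      have hcost₁ : edgeCost w' T₁ = mstCostOn w' Finset.univ := by
        have h1 := edgeCost_exchange w' hxyT he_not_erase
        have h2 : w' s(u, v) = 0 := contractWeight_of_mem heRp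
        have h3 := mstCostOn_le w' hT₁
        have h4 : 0 ≤ w' s(x, y) := contractWeight_nonneg hw S _
        rw [hT₁def] at *
        rw [h1, hcost, h2] at *
        linarith
      have hsub : insert s(u, v) (rpF S T₀) ⊆ rpF S T₁ := by
        intro z hz
        rcases Finset.mem_insert.1 hz with rfl | hz'
        · exact mem_rpF.2 ⟨Finset.mem_insert_self _ _, heRp⟩
        · obtain ⟨hz1, hz2⟩ := mem_rpF.1 hz'
          have hzne : z ≠ s(x, y) := fun h => hxyRp (h ▸ hz2)
          exact mem_rpF.2 ⟨Finset.mem_insert_of_mem (Finset.mem_erase.2 ⟨hzne, hz1⟩), hz2⟩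
      have hlt : (rpF S T₀).card < (rpF S T₁).card := by
        have h5 : s(u, v) ∉ rpF S T₀ := fun h => he_not (mem_rpF.1 h).1
        have h6 := Finset.card_le_card hsub
        rw [Finset.card_insert_of_notMem h5] at h6
        omega
      have hb1 : (rpF S T₁).card ≤ Fintype.card (Sym2 V) := by
        simpa using Finset.card_le_univ (rpF S T₁)
      exact ih (Fintype.card (Sym2 V) - (rpF S T₁).card) (by omega) T₁ hT₁ hcost₁ rfl
  exact main _ T₀ hT₀ hcost₀ rfl

/-- There is an MST of the contracted weight that connects the terminals through
terminal-terminal edges and differs from `T` only by terminal-terminal edges. -/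
lemma exists_good_mst (w : Sym2 V → ℝ) (hw : ∀ e, 0 ≤ w e) (S : Finset V)
    {T : Finset (Sym2 V)} (hT : IsTreeOn Finset.univ T)
    (hTmst : edgeCost w T = mstCostOn w Finset.univ) :
    ∃ Ts, IsTreeOn Finset.univ Ts ∧
      edgeCost (contractWeight w S) Ts = mstCostOn (contractWeight w S) Finset.univ ∧
      (∀ u ∈ S, ∀ v ∈ S, (fromEdgeSet (↑(rpF S Ts) : Set (Sym2 V))).Reachable u v) ∧
      ∀ e ∈ Ts \ T, e ∈ Rpairs S := by
  set w' := contractWeight w S with hw'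
  obtain ⟨Ts₀, h1, h2, h3⟩ := exists_mst_connecting w hw S hT
  have main : ∀ n : ℕ, ∀ Ts : Finset (Sym2 V), IsTreeOn Finset.univ Ts →
      edgeCost w' Ts = mstCostOn w' Finset.univ →
      (∀ u ∈ S, ∀ v ∈ S, (fromEdgeSet (↑(rpF S Ts) : Set (Sym2 V))).Reachable u v) →
      (Ts \ T).card = n →
      ∃ Ts', IsTreeOn Finset.univ Ts' ∧
        edgeCost w' Ts' = mstCostOn w' Finset.univ ∧
        (∀ u ∈ S, ∀ v ∈ S, (fromEdgeSet (↑(rpF S Ts') : Set (Sym2 V))).Reachable u v) ∧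
        ∀ e ∈ Ts' \ T, e ∈ Rpairs S := by
    intro n
    induction n using Nat.strong_induction_on with
    | _ n ih =>
      intro Ts hTs hcost hconn hn
      by_cases hall : ∀ e ∈ Ts \ T, e ∈ Rpairs S
      · exact ⟨Ts, hTs, hcost, hconn, hall⟩
      push_neg at hall
      obtain ⟨f, hfd, hfRp⟩ := hall
      induction f with
      | _ u v =>
      rw [Finset.mem_sdiff] at hfd
      obtain ⟨hfTs, hf_notT⟩ := hfd
      have hune : u ≠ v := by
        have := hTs.2.1 _ hfTs
        rwa [Sym2.isDiag_iff_proj_eq] at this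
      have hsepTs : ¬ (fromEdgeSet (↑(Ts.erase s(u, v)) : Set (Sym2 V))).Reachable u v :=
        tree_not_reach_erase hTs hfTs
      obtain ⟨q, hq⟩ : ∃ q : (fromEdgeSet (↑T : Set (Sym2 V))).Walk u v, q.IsPath := by
        obtain ⟨p⟩ := hT.reach u v
        exact ⟨p.toPath, p.toPath.2⟩
      have hbad : ∃ x y, (fromEdgeSet (↑T : Set (Sym2 V))).Adj x y ∧
          s(x, y) ∈ q.edges ∧
          ¬ (fromEdgeSet (↑(Ts.erase s(u, v)) : Set (Sym2 V))).Reachable x y := by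
        by_contra hno
        push_neg at hno
        exact hsepTs (walk_rel (fun z => Reachable.refl z)
          (fun _ _ _ a b => a.trans b) q hno)
      obtain ⟨x, y, hadj, hqmem, hnrxy⟩ := hbad
      rw [fromEdgeSet_adj] at hadj
      have hxyT : s(x, y) ∈ T := Finset.mem_coe.1 hadj.1
      have hxy_ne_f : s(x, y) ≠ s(u, v) := fun h => hf_notT (h ▸ hxyT)
      have hxyTs : s(x, y) ∉ Ts := by
        intro h
        refine hnrxy (SimpleGraph.Adj.reachable ?_)
        rw [fromEdgeSet_adj]
        exact ⟨Finset.mem_coe.2 (Finset.mem_erase.2 ⟨hxy_ne_f, h⟩), hadj.2⟩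
      -- cycle property in the `w`-MST `T`
      have hwle : w s(x, y) ≤ w s(u, v) := by
        have hsepT : ¬ (fromEdgeSet (↑(T.erase s(x, y)) : Set (Sym2 V))).Reachable u v := by
          have h0 := path_edge_separates q hq.isTrail.edges_nodup hqmem (by
            rw [deleteEdges_eq_erase]
            exact tree_not_reach_erase hT hxyT)
          rwa [deleteEdges_eq_erase] at h0
        have hT₂ : IsTreeOn Finset.univ (insert s(u, v) (T.erase s(x, y))) :=
          exchange hT hxyT hsepT
        have hce := edgeCost_exchange w hxyT
          (fun h => hf_notT (Finset.mem_of_mem_erase h))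
        have hle := mstCostOn_le w hT₂
        rw [hce, hTmst] at hle
        linarith
      set T₃ := insert s(x, y) (Ts.erase s(u, v)) with hT₃def
      have hT₃ : IsTreeOn Finset.univ T₃ := exchange hTs hfTs hnrxy
      have hcost₃ : edgeCost w' T₃ = mstCostOn w' Finset.univ := by
        have hce := edgeCost_exchange w' hfTs
          (fun h => hxyTs (Finset.mem_of_mem_erase h))
        have hfw : w' s(u, v) = w s(u, v) := contractWeight_of_not_mem hfRp
        have hxw : w' s(x, y) ≤ w s(x, y) := contractWeight_le hw S _
        have hle := mstCostOn_le w' hT₃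
        rw [hT₃def] at *
        rw [hce, hcost, hfw] at *
        linarith
      have hconn₃ : ∀ u' ∈ S, ∀ v' ∈ S,
          (fromEdgeSet (↑(rpF S T₃) : Set (Sym2 V))).Reachable u' v' := by
        intro u' hu' v' hv'
        refine (hconn u' hu' v' hv').mono (fromEdgeSet_mono ?_)
        rw [Finset.coe_subset]
        intro z hz
        obtain ⟨hz1, hz2⟩ := mem_rpF.1 hz
        have hzne : z ≠ s(u, v) := fun h => hfRp (h ▸ hz2)
        exact mem_rpF.2 ⟨Finset.mem_insert_of_mem (Finset.mem_erase.2 ⟨hzne, hz1⟩), hz2⟩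
      have hdiff : T₃ \ T = (Ts \ T).erase s(u, v) := by
        ext z
        simp only [hT₃def, Finset.mem_sdiff, Finset.mem_insert, Finset.mem_erase]
        constructor
        · rintro ⟨rfl | ⟨hz1, hz2⟩, h3⟩
          · exact absurd hxyT h3
          · exact ⟨hz1, hz2, h3⟩
        · rintro ⟨hz1, hz2, h3⟩
          exact ⟨Or.inr ⟨hz1, hz2⟩, h3⟩
      have hcard : (T₃ \ T).card < n := by
        rw [hdiff, Finset.card_erase_of_mem (Finset.mem_sdiff.2 ⟨hfTs, hf_notT⟩), hn]
        have : 0 < (Ts \ T).card := Finset.card_pos.2 ⟨_, Finset.mem_sdiff.2 ⟨hfTs, hf_notT⟩⟩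
        omega
      exact ih _ hcard T₃ hT₃ hcost₃ hconn₃ rfl
  exact main _ Ts₀ h1 h2 h3 rfl

/-- Counting: the terminal-terminal edges of a spanning tree that connect all of `S`
form a spanning tree on `S`, hence there are `S.card - 1` of them. -/
lemma card_rpF_of_connecting {S : Finset V} (hSne : S.Nonempty) {Ts : Finset (Sym2 V)}
    (hTs : IsTreeOn Finset.univ Ts)
    (hconn : ∀ u ∈ S, ∀ v ∈ S, (fromEdgeSet (↑(rpF S Ts) : Set (Sym2 V))).Reachable u v) :
    (rpF S Ts).card + 1 = S.card := by
  classical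
  set Z := rpF S Ts with hZ
  set GS : SimpleGraph {x // x ∈ S} :=
    (fromEdgeSet (↑Z : Set (Sym2 V))).comap (Subtype.val) with hGS
  -- walks in `fromEdgeSet Z` stay inside `S`
  have hendS : ∀ e ∈ Z, ∀ x ∈ e, x ∈ S := by
    intro e he x hx
    have heR : e ∈ Rpairs S := (mem_rpF.1 he).2
    induction e with
    | _ a b =>
      rw [mem_rpairs] at heR
      rcases Sym2.mem_iff.1 hx with rfl | rfl
      · exact heR.1
      · exact heR.2.1
  have htrans : ∀ {a b : V} (p : (fromEdgeSet (↑Z : Set (Sym2 V))).Walk a b)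
      (ha : a ∈ S) (hb : b ∈ S), GS.Reachable ⟨a, ha⟩ ⟨b, hb⟩ := by
    intro a b p
    induction p with
    | nil => intro ha hb; exact Reachable.refl _
    | @cons a c b hadj q ih =>
        intro ha hb
        have hc : c ∈ S := by
          rw [fromEdgeSet_adj] at hadj
          exact hendS _ (Finset.mem_coe.1 hadj.1) c (Sym2.mem_mk_right a c)
        have hadj' : GS.Adj ⟨a, ha⟩ ⟨c, hc⟩ := hadj
        exact hadj'.reachable.trans (ih hc hb)
  have hGScon : GS.Connected := by
    haveI : Nonempty {x // x ∈ S} := ⟨⟨hSne.choose, hSne.choose_spec⟩⟩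
    refine ⟨?_⟩
    rintro ⟨a, ha⟩ ⟨b, hb⟩
    obtain ⟨p⟩ := hconn a ha b hb
    exact htrans p ha hb
  have hGSac : GS.IsAcyclic := by
    intro v c hc
    have hadjmap : ∀ {p q : {x // x ∈ S}}, GS.Adj p q →
        (fromEdgeSet (↑Ts : Set (Sym2 V))).Adj p.val q.val := by
      intro p q hpq
      have : (fromEdgeSet (↑Z : Set (Sym2 V))).Adj p.val q.val := hpq
      rw [fromEdgeSet_adj] at this ⊢
      exact ⟨Finset.mem_coe.2 ((mem_rpF.1 (Finset.mem_coe.1 this.1)).1), this.2⟩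
    let hhom : GS →g fromEdgeSet (↑Ts : Set (Sym2 V)) := ⟨Subtype.val, hadjmap⟩
    exact tree_acyclic hTs (c.map hhom) (hc.map (by intro a b h; exact Subtype.val_injective h))
  have hGStree : GS.IsTree := ⟨hGScon, hGSac⟩
  letI : Fintype GS.edgeSet := Fintype.ofFinite _
  have hcard := hGStree.card_edgeFinset
  rw [Fintype.card_coe] at hcard
  rw [← hcard]
  congr 1
  -- the edges of `GS` biject with `Z`
  refine (Finset.card_bij (fun e _ => Sym2.map Subtype.val e) ?_ ?_ ?_).symm
  · intro e he
    rw [mem_edgeFinset] at he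
    induction e with
    | _ a b =>
      have : GS.Adj a b := he
      have : (fromEdgeSet (↑Z : Set (Sym2 V))).Adj a.val b.val := this
      rw [fromEdgeSet_adj] at this
      exact this.1
  · intro e₁ _ e₂ _ h
    exact Sym2.map.injective Subtype.val_injective h
  · intro z hz
    have hzR : z ∈ Rpairs S := (mem_rpF.1 hz).2
    induction z with
    | _ a b =>
      rw [mem_rpairs] at hzR
      obtain ⟨ha, hb, hne⟩ := hzR
      refine ⟨s(⟨a, ha⟩, ⟨b, hb⟩), ?_, rfl⟩
      rw [mem_edgeFinset]
      show GS.Adj ⟨a, ha⟩ ⟨b, hb⟩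
      show (fromEdgeSet (↑Z : Set (Sym2 V))).Adj a b
      rw [fromEdgeSet_adj]
      exact ⟨Finset.mem_coe.2 hz, hne⟩

lemma sum_split (X Y : Finset (Sym2 V)) (g : Sym2 V → ℝ) :
    ∑ e ∈ X, g e = ∑ e ∈ X \ Y, g e + ∑ e ∈ X ∩ Y, g e := by
  conv_lhs => rw [← Finset.sdiff_union_inter X Y]
  rw [Finset.sum_union (Finset.disjoint_sdiff_inter X Y)]

lemma card_split (X Y : Finset (Sym2 V)) :
    X.card = (X \ Y).card + (X ∩ Y).card := by
  conv_lhs => rw [← Finset.sdiff_union_inter X Y]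
  rw [Finset.card_union_of_disjoint (Finset.disjoint_sdiff_inter X Y)]


/-- For a full component `C` with terminal set `S` (`|S| ≥ 2`) and
a weighted complete graph `M` (weights `w`, MST `T`), the save of `C` decomposes
into save edges: there are `|S| − 1` edges `D ⊆ T` (the removed maximum-cost path
edges) and zero-cost edges `Z` between terminals of `S` such that `(T \ D) ∪ Z` is
a minimum spanning tree of the contraction `M/C`, and
`save(M, C) = d(MST(M)) − d(MST(M/C))` equals the total cost of the removed
edges `D`. -/
theorem save_decomposes_into_save_edges
    (w : Sym2 V → ℝ) (hw : ∀ e, 0 ≤ w e)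
    (S : Finset V) (hS : 2 ≤ S.card)
    (T : Finset (Sym2 V)) (hT : IsTreeOn Finset.univ T)
    (hTmst : edgeCost w T = mstCostOn w Finset.univ) :
    ∃ (D Z : Finset (Sym2 V)),
      D ⊆ T ∧ D.card = S.card - 1 ∧ (∀ e ∈ Z, e ∈ Rpairs S) ∧
      IsTreeOn Finset.univ ((T \ D) ∪ Z) ∧
      edgeCost (contractWeight w S) ((T \ D) ∪ Z)
        = mstCostOn (contractWeight w S) Finset.univ ∧
      mstCostOn w Finset.univ - mstCostOn (contractWeight w S) Finset.univ
        = edgeCost w D := by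
  set w' := contractWeight w S with hw'
  obtain ⟨Ts, hTs, hTscost, hconn, hgood⟩ := exists_good_mst w hw S hT hTmst
  have hSne : S.Nonempty := Finset.card_pos.1 (by omega)
  have hZcard : (rpF S Ts).card + 1 = S.card := card_rpF_of_connecting hSne hTs hconn
  refine ⟨(T \ Ts) ∪ (rpF S T ∩ Ts), rpF S Ts, ?_, ?_, ?_, ?_, ?_, ?_⟩
  · -- D ⊆ T
    intro z hz
    rcases Finset.mem_union.1 hz with h | h
    · exact (Finset.mem_sdiff.1 h).1
    · exact (mem_rpF.1 (Finset.mem_inter.1 h).1).1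
  · -- cardinality
    have hdisj : Disjoint (T \ Ts) (rpF S T ∩ Ts) := by
      rw [Finset.disjoint_left]
      intro z hz hz'
      exact (Finset.mem_sdiff.1 hz).2 (Finset.mem_inter.1 hz').2
    rw [Finset.card_union_of_disjoint hdisj]
    have hcT := hT.card_eq
    have hcTs := hTs.card_eq
    have e1 := card_split T Ts
    have e2 := card_split Ts T
    have e3 := card_split (rpF S Ts) T
    have hZd : rpF S Ts \ T = Ts \ T := by
      ext z
      simp only [Finset.mem_sdiff, mem_rpF]
      constructor
      · rintro ⟨⟨h1, _⟩, h2⟩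
        exact ⟨h1, h2⟩
      · rintro ⟨h1, h2⟩
        exact ⟨⟨h1, hgood z (Finset.mem_sdiff.2 ⟨h1, h2⟩)⟩, h2⟩
    have hZi : rpF S Ts ∩ T = rpF S T ∩ Ts := by
      ext z
      simp only [Finset.mem_inter, mem_rpF]
      tauto
    have hTi : (T ∩ Ts).card = (Ts ∩ T).card := by rw [Finset.inter_comm T Ts]
    rw [hZd, hZi] at e3
    omega
  · -- Z ⊆ Rpairs
    exact fun e he => (mem_rpF.1 he).2
  all_goals
    have hset : (T \ ((T \ Ts) ∪ (rpF S T ∩ Ts))) ∪ rpF S Ts = Ts := by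
      ext z
      simp only [Finset.mem_union, Finset.mem_sdiff, Finset.mem_inter, mem_rpF]
      constructor
      · rintro (⟨hzT, hzn⟩ | ⟨h1, _⟩)
        · by_cases hzTs : z ∈ Ts
          · exact hzTs
          · exact absurd (Or.inl ⟨hzT, hzTs⟩) hzn
        · exact h1
      · intro hzTs
        by_cases hzT : z ∈ T
        · by_cases hzR : z ∈ Rpairs S
          · exact Or.inr ⟨hzTs, hzR⟩
          · refine Or.inl ⟨hzT, ?_⟩
            rintro (h | h)
            · exact h.2 hzTs
            · exact hzR h.1.2
        · exact Or.inr ⟨hzTs, hgood z (Finset.mem_sdiff.2 ⟨hzTs, hzT⟩)⟩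
  · rw [hset]; exact hTs
  · rw [hset]; exact hTscost
  · -- the cost identity
    rw [← hTmst, ← hTscost]
    have hdisj : Disjoint (T \ Ts) (rpF S T ∩ Ts) := by
      rw [Finset.disjoint_left]
      intro z hz hz'
      exact (Finset.mem_sdiff.1 hz).2 (Finset.mem_inter.1 hz').2
    unfold edgeCost
    rw [Finset.sum_union hdisj]
    have e1 := sum_split T Ts w
    have e2 := sum_split Ts T w'
    have e3 := sum_split (Ts ∩ T) (rpF S T) w'
    have z1 : ∑ e ∈ Ts \ T, w' e = 0 := by
      refine Finset.sum_eq_zero ?_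
      intro z hz
      exact contractWeight_of_mem (hgood z hz)
    have z2 : ∑ e ∈ (Ts ∩ T) ∩ rpF S T, w' e = 0 := by
      refine Finset.sum_eq_zero ?_
      intro z hz
      exact contractWeight_of_mem (mem_rpF.1 (Finset.mem_inter.1 hz).2).2
    have z3 : ∑ e ∈ (Ts ∩ T) \ rpF S T, w' e = ∑ e ∈ (Ts ∩ T) \ rpF S T, w e := by
      refine Finset.sum_congr rfl ?_
      intro z hz
      rw [Finset.mem_sdiff, Finset.mem_inter] at hz
      refine contractWeight_of_not_mem ?_
      intro hzR
      exact hz.2 (mem_rpF.2 ⟨hz.1.2, hzR⟩)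
    have z4 : ∑ e ∈ (Ts ∩ T) \ rpF S T, w e + ∑ e ∈ (Ts ∩ T) ∩ rpF S T, w e
        = ∑ e ∈ Ts ∩ T, w e := (sum_split _ _ w).symm
    have hi1 : (Ts ∩ T) ∩ rpF S T = rpF S T ∩ Ts := by
      ext z
      simp only [Finset.mem_inter, mem_rpF]
      tauto
    have hi2 : ∑ e ∈ T ∩ Ts, w e = ∑ e ∈ Ts ∩ T, w e := by rw [Finset.inter_comm T Ts]
    rw [hi1] at z2 z4 e3
    linarith
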